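/- arXiv:1203.0481 — 2 statements merged into one kernel-verified Lean document; each statement's English description precedes it below -/
import Mathlib

section
/- Let A be an attractor of the IFS F with basin B(A), let x_0 ∈ B(A) and let σ ∈ Σ^∞ be disjunctive. Then for every map f in the semigroup S_F generated by F under composition, i.e. every f = f_{σ_1} ∘ … ∘ f_{σ_k} with k ≥ 1 and σ_1 … σ_k ∈ Σ^k, one has f(C_∞(x_0,σ)) ∩ C_∞(x_0,σ) ≠ ∅. -/
open Metric Filter Set MeasureTheory

variable {X : Type*} [MetricSpace X] [CompleteSpace X]
variable {Λ : Type*} [Fintype Λ] [Nonempty Λ]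

/-- The Hutchinson operator of the IFS given by the maps `f a`, `a : Λ`. -/
def Hutch (f : Λ → X → X) (B : Set X) : Set X := ⋃ a : Λ, f a '' B

/-- `A` attracts, under iteration of the Hutchinson operator, every nonempty
compact subset of `U`, in the Hausdorff metric. -/
def Attracts (f : Λ → X → X) (A U : Set X) : Prop :=
  ∀ B : Set X, B.Nonempty → IsCompact B → B ⊆ U →
    Tendsto (fun k : ℕ => hausdorffDist ((Hutch f)^[k] B) A) atTop (nhds 0)

/-- `A` is an attractor of the IFS `f`: a nonempty compact set admitting an open
neighbourhood `U ⊇ A` all of whose nonempty compact subsets are attracted to `A`. -/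
def IsAttractor (f : Λ → X → X) (A : Set X) : Prop :=
  A.Nonempty ∧ IsCompact A ∧ ∃ U : Set X, IsOpen U ∧ A ⊆ U ∧ Attracts f A U

/-- The basin of the attractor `A`: the union of all open `U ⊇ A` from which `A` attracts. -/
def basin (f : Λ → X → X) (A : Set X) : Set X :=
  ⋃₀ {U : Set X | IsOpen U ∧ A ⊆ U ∧ Attracts f A U}

/-- The chaos game orbit of `x₀` driven by the sequence `σ` (0-indexed: `σ 0` acts first). -/
def orbit (f : Λ → X → X) (σ : ℕ → Λ) (x₀ : X) : ℕ → X
  | 0 => x₀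
  | k + 1 => f (σ k) (orbit f σ x₀ k)

/-- `C_K(x₀,σ)`: the closure of the tail `{x_k : k ≥ K}` of the chaos game orbit. -/
def tailSet (f : Λ → X → X) (σ : ℕ → Λ) (x₀ : X) (K : ℕ) : Set X :=
  closure {y : X | ∃ k : ℕ, K ≤ k ∧ orbit f σ x₀ k = y}

/-- `C_∞(x₀,σ) = ⋂_K C_K(x₀,σ)`. -/
def Cinf (f : Λ → X → X) (σ : ℕ → Λ) (x₀ : X) : Set X :=
  ⋂ K : ℕ, tailSet f σ x₀ K

/-- For a word `w = (σ₁, …, σ_m)`, `wordApply f w = f_{σ_m} ∘ ⋯ ∘ f_{σ_1}`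
(the letter `w 0` acts first). -/
def wordApply (f : Λ → X → X) {m : ℕ} (w : Fin m → Λ) (x : X) : X :=
  (List.ofFn w).foldl (fun y a => f a y) x

/-- A sequence of symbols is disjunctive if it contains every finite word
as a block of consecutive letters. -/
def Disjunctive {Γ : Type*} (σ : ℕ → Γ) : Prop :=
  ∀ (m : ℕ) (w : Fin m → Γ), ∃ j : ℕ, ∀ l : Fin m, σ (j + l.1) = w l

/-- `fibreComp f ρ K = f_{ρ_1} ∘ f_{ρ_2} ∘ ⋯ ∘ f_{ρ_K}` (0-indexed: `f (ρ 0) ∘ ⋯ ∘ f (ρ (K-1))`). -/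
def fibreComp (f : Λ → X → X) (ρ : ℕ → Λ) : ℕ → X → X
  | 0 => id
  | K + 1 => fibreComp f ρ K ∘ f (ρ K)

/-- The fibre `A_ρ = ⋂_{K ≥ 1} f_{ρ_1} ∘ ⋯ ∘ f_{ρ_K}(A)` of the attractor `A`. -/
def fibre (f : Λ → X → X) (A : Set X) (ρ : ℕ → Λ) : Set X :=
  ⋂ K : ℕ, fibreComp f ρ (K + 1) '' A

/-- `A` is strongly fibred: every open set meeting `A` contains a fibre. -/
def StronglyFibred (f : Λ → X → X) (A : Set X) : Prop :=
  ∀ U : Set X, IsOpen U → (U ∩ A).Nonempty → ∃ ρ : ℕ → Λ, fibre f A ρ ⊆ U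

lemma orbit_mem_iterate (f : Λ → X → X) (σ : ℕ → Λ) (x₀ : X) (k : ℕ) :
    orbit f σ x₀ k ∈ (Hutch f)^[k] {x₀} := by
  induction k with
  | zero => simp [orbit]
  | succ n ih =>
      rw [Function.iterate_succ_apply']
      exact Set.mem_iUnion.2 ⟨σ n, Set.mem_image_of_mem _ ih⟩

lemma iterate_hutch_finite (f : Λ → X → X) (x₀ : X) (k : ℕ) :
    ((Hutch f)^[k] ({x₀} : Set X)).Finite := by
  induction k with
  | zero => simp
  | succ n ih =>
      rw [Function.iterate_succ_apply']
      exact Set.finite_iUnion fun a => ih.image _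

lemma foldl_continuous (f : Λ → X → X) (hf : ∀ a : Λ, Continuous (f a)) (l : List Λ) :
    Continuous fun x : X => l.foldl (fun y a => f a y) x := by
  induction l with
  | nil => exact continuous_id
  | cons a l ih => exact ih.comp (hf a)

lemma orbit_add (f : Λ → X → X) (σ : ℕ → Λ) (x₀ : X) (j m : ℕ) :
    orbit f σ x₀ (j + m) =
      (List.ofFn fun l : Fin m => σ (j + l.1)).foldl (fun y a => f a y)
        (orbit f σ x₀ j) := by
  induction m with
  | zero => simp
  | succ n ih =>
      have : (List.ofFn fun l : Fin (n + 1) => σ (j + l.1)) =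
          (List.ofFn fun l : Fin n => σ (j + l.1)) ++ [σ (j + n)] := by
        rw [List.ofFn_succ']
        simp [List.concat_eq_append]
      rw [show j + (n + 1) = (j + n) + 1 from rfl]
      simp only [orbit, ih, this, List.foldl_append, List.foldl_cons, List.foldl_nil]

lemma disjunctive_exists_ge {σ : ℕ → Λ} (hσ : Disjunctive σ) (k : ℕ) (w : Fin k → Λ)
    (m : ℕ) : ∃ j : ℕ, m ≤ j ∧ ∀ l : Fin k, σ (j + l.1) = w l := by
  classical
  set w' : Fin (m + k) → Λ := fun i =>
    if h : i.1 < m then Classical.arbitrary Λ else w ⟨i.1 - m, by omega⟩ with hw'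
  obtain ⟨j, hj⟩ := hσ (m + k) w'
  refine ⟨j + m, Nat.le_add_left m j, fun l => ?_⟩
  have h1 := hj ⟨m + l.1, by omega⟩
  have h2 : w' ⟨m + l.1, by omega⟩ = w l := by
    simp only [hw']
    rw [dif_neg (by omega)]
    congr 1
    ext
    simp
  rw [← h2, ← h1]
  ring_nf

/-- Lemma 3: if `σ` is disjunctive then every element
`f = f_{σ_1} ∘ ⋯ ∘ f_{σ_k}` (`k ≥ 1`) of the semigroup generated by the IFS satisfies
`f(C_∞(x₀,σ)) ∩ C_∞(x₀,σ) ≠ ∅`. -/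
theorem chaosGame_semigroup_image_inter_Cinf
    (f : Λ → X → X) (hf : ∀ a : Λ, Continuous (f a))
    (A : Set X) (hA : IsAttractor f A)
    (x₀ : X) (hx₀ : x₀ ∈ basin f A)
    (σ : ℕ → Λ) (hσ : Disjunctive σ)
    (k : ℕ) (hk : 0 < k) (w : Fin k → Λ) :
    (wordApply f w '' Cinf f σ x₀ ∩ Cinf f σ x₀).Nonempty := by
  classical
  obtain ⟨hAne, hAcomp, -⟩ := hA
  obtain ⟨U, ⟨hUopen, hAU, hAttr⟩, hxU⟩ := hx₀
  have htend := hAttr {x₀} ⟨x₀, rfl⟩ isCompact_singleton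
    (Set.singleton_subset_iff.2 hxU)
  -- infDist of orbit points to A tends to 0
  have hinf : Tendsto (fun n => infDist (orbit f σ x₀ n) A) atTop (nhds 0) := by
    refine squeeze_zero (fun n => infDist_nonneg) (fun n => ?_) htend
    refine infDist_le_hausdorffDist_of_mem (orbit_mem_iterate f σ x₀ n) ?_
    exact hausdorffEdist_ne_top_of_nonempty_of_bounded
      ⟨_, orbit_mem_iterate f σ x₀ n⟩ hAne
      (iterate_hutch_finite f x₀ n).isBounded hAcomp.isBounded
  -- occurrences of `w` at arbitrarily large positions
  have hocc : ∀ m : ℕ, ∃ j : ℕ, m ≤ j ∧ ∀ l : Fin k, σ (j + l.1) = w l :=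
    disjunctive_exists_ge hσ k w
  choose j hj1 hj2 using hocc
  -- nearest points in A
  have hnear : ∀ n : ℕ, ∃ a ∈ A, infDist (orbit f σ x₀ (j n)) A =
      dist (orbit f σ x₀ (j n)) a := fun n =>
    hAcomp.exists_infDist_eq_dist hAne (orbit f σ x₀ (j n))
  choose a haA had using hnear
  obtain ⟨b, hbA, φ, hφmono, hφtend⟩ := hAcomp.tendsto_subseq haA
  have hjφ : ∀ n : ℕ, n ≤ j (φ n) := fun n => (hφmono.le_apply).trans (hj1 (φ n))
  have hjtend : Tendsto (fun n => j (φ n)) atTop atTop :=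
    tendsto_atTop_mono hjφ tendsto_id
  -- the orbit subsequence tends to b
  have horb : Tendsto (fun n => orbit f σ x₀ (j (φ n))) atTop (nhds b) := by
    rw [tendsto_iff_dist_tendsto_zero]
    refine squeeze_zero (fun n => dist_nonneg) (fun n => dist_triangle _ (a (φ n)) b) ?_
    have h1 : Tendsto (fun n => dist (orbit f σ x₀ (j (φ n))) (a (φ n))) atTop
        (nhds 0) := by
      have := hinf.comp hjtend
      simpa only [Function.comp_def, had] using this
    have h2 : Tendsto (fun n => dist (a (φ n)) b) atTop (nhds 0) :=
      tendsto_iff_dist_tendsto_zero.1 hφtend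
    simpa using h1.add h2
  -- orbit at j + k equals wordApply of orbit at j
  have hword : ∀ n : ℕ, orbit f σ x₀ (j n + k) = wordApply f w (orbit f σ x₀ (j n)) := by
    intro n
    rw [orbit_add, wordApply]
    congr 2
    exact funext fun l => hj2 n l
  -- image subsequence tends to wordApply f w b
  have himg : Tendsto (fun n => orbit f σ x₀ (j (φ n) + k)) atTop
      (nhds (wordApply f w b)) := by
    simp only [hword]
    exact ((foldl_continuous f hf (List.ofFn w)).tendsto b).comp horb
  -- membership in Cinf via tail sets
  have hmemCinf : ∀ (y : X) (u : ℕ → ℕ), Tendsto u atTop atTop →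
      (∀ n, u n ≤ u n) →
      Tendsto (fun n => orbit f σ x₀ (u n)) atTop (nhds y) → y ∈ Cinf f σ x₀ := by
    intro y u hu _ hconv
    refine Set.mem_iInter.2 fun K => ?_
    refine mem_closure_of_tendsto hconv ?_
    filter_upwards [hu.eventually_ge_atTop K] with n hn
    exact ⟨u n, hn, rfl⟩
  have hb : b ∈ Cinf f σ x₀ := hmemCinf b _ hjtend (fun _ => le_rfl) horb
  have hwb : wordApply f w b ∈ Cinf f σ x₀ := by
    refine hmemCinf _ (fun n => j (φ n) + k) ?_ (fun _ => le_rfl) himg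
    exact tendsto_atTop_mono (fun n => Nat.le_add_right _ _) hjtend
  exact ⟨wordApply f w b, ⟨b, hb, rfl⟩, hwb⟩
end

section
/- Let A be a strongly-fibred attractor of the IFS F with basin B(A) and let x_0 ∈ B(A). Then the set of sequences σ = (σ_n)_{n≥1} ∈ Σ^∞ for which the chaos game orbit (x_k)_{k≥0} of x_0 driven by σ fails to satisfy C_∞(x_0,σ) = A (equivalently, for which the tails {x_n : n ≥ p} do not converge to A in the Hausdorff metric as p → ∞) is σ-porous in the Cantor space (Σ^∞, ϱ) with the Baire metric. -/
open Metric Filter Set MeasureTheory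

variable {X : Type*} [MetricSpace X] [CompleteSpace X]
variable {Λ : Type*} [Fintype Λ] [Nonempty Λ]

open Classical in
/-- The Baire metric `ϱ(x,y) = 2^{-min{i ≥ 1 : x_i ≠ y_i}}` on the Cantor space of
(0-indexed) sequences: here `min` of the 1-indexed paper corresponds to `sInf + 1`. -/
noncomputable def baireDist {Γ : Type*} (x y : ℕ → Γ) : ℝ :=
  if x = y then 0 else (2 : ℝ) ^ (-((sInf {i : ℕ | x i ≠ y i} : ℕ) : ℤ) - 1)

/-- `Ψ` is porous with respect to the distance function `ρ`. -/
def PorousWith {M : Type*} (ρ : M → M → ℝ) (Ψ : Set M) : Prop :=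
  ∃ lam : ℝ, 0 < lam ∧ lam < 1 ∧ ∃ r₀ : ℝ, 0 < r₀ ∧
    ∀ ψ ∈ Ψ, ∀ r : ℝ, 0 < r → r < r₀ →
      ∃ υ : M, {x : M | ρ υ x < lam * r} ⊆ {x : M | ρ ψ x < r} \ Ψ

/-- `Ψ` is σ-porous with respect to `ρ`: a countable union of porous sets. -/
def SigmaPorousWith {M : Type*} (ρ : M → M → ℝ) (Ψ : Set M) : Prop :=
  ∃ c : ℕ → Set M, (∀ n : ℕ, PorousWith ρ (c n)) ∧ Ψ = ⋃ n : ℕ, c n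

section AuxGeometry
set_option linter.unusedSectionVars false

variable {f : Λ → X → X}

lemma isCompact_hutch (hf : ∀ a, Continuous (f a)) {B : Set X} (hB : IsCompact B) :
    IsCompact (Hutch f B) :=
  isCompact_iUnion fun a => hB.image (hf a)

lemma hutch_nonempty {B : Set X} (hB : B.Nonempty) : (Hutch f B).Nonempty := by
  obtain ⟨b, hb⟩ := hB
  exact ⟨f (Classical.arbitrary Λ) b, Set.mem_iUnion.2 ⟨_, Set.mem_image_of_mem _ hb⟩⟩

lemma isCompact_hutch_iterate (hf : ∀ a, Continuous (f a)) {B : Set X} (hB : IsCompact B)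
    (k : ℕ) : IsCompact ((Hutch f)^[k] B) := by
  induction k with
  | zero => exact hB
  | succ k ih => rw [Function.iterate_succ_apply']; exact isCompact_hutch hf ih

lemma hutch_iterate_nonempty {B : Set X} (hB : B.Nonempty) (k : ℕ) :
    ((Hutch f)^[k] B).Nonempty := by
  induction k with
  | zero => exact hB
  | succ k ih => rw [Function.iterate_succ_apply']; exact hutch_nonempty ih

lemma orbit_mem_hutch_iterate (σ : ℕ → Λ) (x₀ : X) (k : ℕ) :
    orbit f σ x₀ k ∈ (Hutch f)^[k] ({x₀} : Set X) := by
  induction k with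
  | zero => simp [orbit]
  | succ k ih =>
    rw [Function.iterate_succ_apply']
    exact Set.mem_iUnion.2 ⟨σ k, Set.mem_image_of_mem _ ih⟩

lemma tendsto_infDist_hutch_seq (hf : ∀ a, Continuous (f a))
    {A : Set X} (hAne : A.Nonempty) (hAc : IsCompact A)
    {B : Set X} (hBc : IsCompact B)
    (h : Tendsto (fun k => hausdorffDist ((Hutch f)^[k] B) A) atTop (nhds 0))
    (g : ℕ → X) (hg : ∀ k, g k ∈ (Hutch f)^[k] B) :
    Tendsto (fun k => infDist (g k) A) atTop (nhds 0) := by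
  refine squeeze_zero (fun k => infDist_nonneg) (fun k => ?_) h
  exact infDist_le_hausdorffDist_of_mem (hg k)
    (hausdorffEdist_ne_top_of_nonempty_of_bounded ⟨g k, hg k⟩ hAne
      (isCompact_hutch_iterate hf hBc k).isBounded hAc.isBounded)

lemma hutch_attractor_subset (hf : ∀ a, Continuous (f a))
    {A : Set X} (hAne : A.Nonempty) (hAc : IsCompact A)
    (h : Tendsto (fun k => hausdorffDist ((Hutch f)^[k] A) A) atTop (nhds 0)) :
    Hutch f A ⊆ A := by
  intro y hy
  obtain ⟨a, z, hz, rfl⟩ : ∃ a z, z ∈ A ∧ f a z = y := by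
    obtain ⟨sa, ⟨a, rfl⟩, hy⟩ := hy
    obtain ⟨z, hz, rfl⟩ := hy
    exact ⟨a, z, hz, rfl⟩
  refine (hAc.isClosed.mem_iff_infDist_zero hAne).2 (le_antisymm ?_ infDist_nonneg)
  refine le_of_forall_pos_le_add fun ε hε => ?_
  obtain ⟨δ, hδ, hδc⟩ := Metric.continuous_iff.1 (hf a) z (ε / 2) (half_pos hε)
  obtain ⟨K, hK⟩ := (Filter.eventually_atTop).1
    (h.eventually (gt_mem_nhds (lt_min hδ (half_pos hε))))
  have hKne : ((Hutch f)^[K] A).Nonempty := hutch_iterate_nonempty hAne K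
  have hedist : ∀ k : ℕ, EMetric.hausdorffEdist ((Hutch f)^[k] A) A ≠ ⊤ := fun k =>
    hausdorffEdist_ne_top_of_nonempty_of_bounded (hutch_iterate_nonempty hAne k) hAne
      (isCompact_hutch_iterate hf hAc k).isBounded hAc.isBounded
  have h1 : infDist z ((Hutch f)^[K] A) < δ := by
    have := infDist_le_hausdorffDist_of_mem hz
      (hausdorffEdist_ne_top_of_nonempty_of_bounded hAne hKne hAc.isBounded
        (isCompact_hutch_iterate hf hAc K).isBounded)
    calc infDist z ((Hutch f)^[K] A) ≤ hausdorffDist A ((Hutch f)^[K] A) := this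
      _ = hausdorffDist ((Hutch f)^[K] A) A := hausdorffDist_comm
      _ < δ := lt_of_lt_of_le (hK K le_rfl) (min_le_left _ _)
  obtain ⟨z', hz', hzz'⟩ := (infDist_lt_iff hKne).1 h1
  have h2 : f a z' ∈ (Hutch f)^[K + 1] A := by
    rw [Function.iterate_succ_apply']
    exact Set.mem_iUnion.2 ⟨a, Set.mem_image_of_mem _ hz'⟩
  have h3 : infDist (f a z') A < ε / 2 :=
    lt_of_le_of_lt (infDist_le_hausdorffDist_of_mem h2 (hedist (K + 1)))
      (lt_of_lt_of_le (hK (K + 1) (Nat.le_succ K)) (min_le_right _ _))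
  have h4 : dist (f a z) (f a z') < ε / 2 := by
    rw [dist_comm]; exact hδc z' (by rwa [dist_comm] at hzz')
  calc infDist (f a z) A ≤ infDist (f a z') A + dist (f a z) (f a z') :=
        infDist_le_infDist_add_dist
    _ ≤ ε / 2 + ε / 2 := by linarith
    _ = 0 + ε := by ring

end AuxGeometry
section AuxOrbit
set_option linter.unusedSectionVars false

variable {f : Λ → X → X}

lemma continuous_fibreComp (hf : ∀ a, Continuous (f a)) (ρ : ℕ → Λ) (m : ℕ) :
    Continuous (fibreComp f ρ m) := by
  induction m with
  | zero => exact continuous_id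
  | succ m ih => exact ih.comp (hf (ρ m))

lemma orbit_add_s13 (σ ρ : ℕ → Λ) (x₀ : X) (m : ℕ) :
    ∀ j : ℕ, (∀ l, l < m → σ (j + l) = ρ (m - 1 - l)) →
      orbit f σ x₀ (j + m) = fibreComp f ρ m (orbit f σ x₀ j) := by
  induction m with
  | zero => intro j _; rfl
  | succ m ih =>
    intro j hj
    rw [show j + (m + 1) = (j + 1) + m from by omega]
    rw [ih (j + 1) (fun l hl => by
      rw [show j + 1 + l = j + (l + 1) from by omega, hj (l + 1) (by omega)]
      congr 1
      omega)]
    show fibreComp f ρ m (orbit f σ x₀ (j + 1)) = fibreComp f ρ (m + 1) (orbit f σ x₀ j)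
    have hσj : σ j = ρ m := by
      have := hj 0 (by omega)
      simpa using this
    show fibreComp f ρ m (f (σ j) (orbit f σ x₀ j)) = fibreComp f ρ m (f (ρ m) (orbit f σ x₀ j))
    rw [hσj]

lemma cinf_subset_attractor (hf : ∀ a, Continuous (f a))
    {A : Set X} (hAne : A.Nonempty) (hAc : IsCompact A) {x₀ : X}
    (htend : Tendsto (fun k => hausdorffDist ((Hutch f)^[k] ({x₀} : Set X)) A) atTop (nhds 0))
    (σ : ℕ → Λ) : Cinf f σ x₀ ⊆ A := by
  have horb : Tendsto (fun k => infDist (orbit f σ x₀ k) A) atTop (nhds 0) :=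
    tendsto_infDist_hutch_seq hf hAne hAc isCompact_singleton htend _
      (orbit_mem_hutch_iterate σ x₀)
  intro y hy
  refine (hAc.isClosed.mem_iff_infDist_zero hAne).2 (le_antisymm ?_ infDist_nonneg)
  refine le_of_forall_pos_le_add fun ε hε => ?_
  obtain ⟨K, hK⟩ := (Filter.eventually_atTop).1 (horb.eventually (gt_mem_nhds hε))
  have hyK : y ∈ tailSet f σ x₀ K := Set.mem_iInter.1 hy K
  have hsub : tailSet f σ x₀ K ⊆ {z : X | infDist z A ≤ ε} := by
    refine closure_minimal ?_ (isClosed_le (continuous_infDist_pt A) continuous_const)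
    rintro _ ⟨k, hk, rfl⟩
    exact (hK k hk).le
  calc infDist y A ≤ ε := hsub hyK
    _ = 0 + ε := (zero_add ε).symm

lemma attractor_subset_cinf (hf : ∀ a, Continuous (f a))
    {A : Set X} (hAne : A.Nonempty) (hAc : IsCompact A)
    (hFA : Hutch f A ⊆ A) (hsf : StronglyFibred f A)
    {x₀ : X} {σ : ℕ → Λ}
    (horb : Tendsto (fun k => infDist (orbit f σ x₀ k) A) atTop (nhds 0))
    (hdisj : Disjunctive σ) : A ⊆ Cinf f σ x₀ := by
  intro a ha
  refine Set.mem_iInter.2 fun K₀ => ?_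
  rw [tailSet, Metric.mem_closure_iff]
  intro ε hε
  obtain ⟨ρ, hρ⟩ := hsf (Metric.ball a ε) Metric.isOpen_ball ⟨a, Metric.mem_ball_self hε, ha⟩
  -- find a finite stage of the fibre inside the ball
  have hS : ∀ K : ℕ, IsCompact (fibreComp f ρ (K + 1) '' A) := fun K =>
    hAc.image (continuous_fibreComp hf ρ (K + 1))
  have hSanti : ∀ K : ℕ, fibreComp f ρ (K + 2) '' A ⊆ fibreComp f ρ (K + 1) '' A := by
    intro K
    have h1 : f (ρ (K + 1)) '' A ⊆ A := fun y hy =>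
      hFA (Set.mem_iUnion.2 ⟨ρ (K + 1), hy⟩)
    calc fibreComp f ρ (K + 2) '' A
        = fibreComp f ρ (K + 1) '' (f (ρ (K + 1)) '' A) := by
          rw [← Set.image_comp]; rfl
      _ ⊆ fibreComp f ρ (K + 1) '' A := Set.image_mono h1
  obtain ⟨m, hm⟩ : ∃ m : ℕ, fibreComp f ρ (m + 1) '' A ⊆ Metric.ball a ε := by
    by_contra hcon
    push_neg at hcon
    have hTne : ∀ K : ℕ, (fibreComp f ρ (K + 1) '' A \ Metric.ball a ε).Nonempty := by
      intro K
      obtain ⟨x, hx1, hx2⟩ := Set.not_subset.1 (hcon K)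
      exact ⟨x, hx1, hx2⟩
    have hiter := IsCompact.nonempty_iInter_of_sequence_nonempty_isCompact_isClosed
      (fun K => fibreComp f ρ (K + 1) '' A \ Metric.ball a ε)
      (fun K => Set.diff_subset_diff_left (hSanti K)) hTne
      ((hS 0).diff Metric.isOpen_ball)
      (fun K => ((hS K).diff Metric.isOpen_ball).isClosed)
    obtain ⟨x, hx⟩ := hiter
    have hx1 : x ∈ fibre f A ρ := Set.mem_iInter.2 fun K => (Set.mem_iInter.1 hx K).1
    exact (Set.mem_iInter.1 hx 0).2 (hρ hx1)
  set g := fibreComp f ρ (m + 1) with hg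
  have hgA : A ⊆ g ⁻¹' Metric.ball a ε := fun z hz => hm (Set.mem_image_of_mem g hz)
  obtain ⟨δ, hδ, hth⟩ := hAc.exists_thickening_subset_open
    (Metric.isOpen_ball.preimage (continuous_fibreComp hf ρ (m + 1))) hgA
  obtain ⟨K₁', hK₁'⟩ := (Filter.eventually_atTop).1 (horb.eventually (gt_mem_nhds hδ))
  set K₁ := max K₀ K₁' with hK₁def
  -- a word that contains the fibre word at offset K₁
  classical
  set W : Fin (K₁ + (m + 1)) → Λ := fun l =>
    if K₁ ≤ l.1 then ρ (m + 1 - 1 - (l.1 - K₁)) else Classical.arbitrary Λ with hW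
  obtain ⟨j, hj⟩ := hdisj (K₁ + (m + 1)) W
  have hjl : ∀ l, l < m + 1 → σ (j + K₁ + l) = ρ (m + 1 - 1 - l) := by
    intro l hl
    have := hj ⟨K₁ + l, by omega⟩
    rw [hW] at this
    simp only [if_pos (by omega : K₁ ≤ K₁ + l)] at this
    rw [show j + K₁ + l = j + (K₁ + l) from by omega, this]
    congr 1
    omega
  have horbit : orbit f σ x₀ (j + K₁ + (m + 1)) = g (orbit f σ x₀ (j + K₁)) :=
    orbit_add_s13 σ ρ x₀ (m + 1) (j + K₁) hjl
  have hnear : orbit f σ x₀ (j + K₁) ∈ Metric.thickening δ A := by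
    have h1 : infDist (orbit f σ x₀ (j + K₁)) A < δ := hK₁' (j + K₁) (by omega)
    obtain ⟨z, hz, hdz⟩ := (infDist_lt_iff hAne).1 h1
    exact Metric.mem_thickening_iff.2 ⟨z, hz, hdz⟩
  have hball : orbit f σ x₀ (j + K₁ + (m + 1)) ∈ Metric.ball a ε := by
    rw [horbit]
    exact hth hnear
  refine ⟨orbit f σ x₀ (j + K₁ + (m + 1)), ⟨j + K₁ + (m + 1), by omega, rfl⟩, ?_⟩
  rw [dist_comm]
  exact hball

end AuxOrbit
section AuxBaire

lemma baireDist_lt_of_agree {Γ : Type*} {x y : ℕ → Γ} {n : ℕ}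
    (h : ∀ i, i < n → x i = y i) {s : ℝ} (hs : (2 : ℝ) ^ (-(n : ℤ) - 1) < s) :
    baireDist x y < s := by
  classical
  unfold baireDist
  split_ifs with hxy
  · exact lt_of_le_of_lt (by positivity) hs
  · set D := {i : ℕ | x i ≠ y i} with hD
    have hne : D.Nonempty := by
      obtain ⟨i, hi⟩ := Function.ne_iff.1 hxy
      exact ⟨i, hi⟩
    have hmem := Nat.sInf_mem hne
    have hnle : n ≤ sInf D := by
      by_contra hlt
      push_neg at hlt
      exact hmem (h _ hlt)
    calc (2 : ℝ) ^ (-((sInf D : ℕ) : ℤ) - 1)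
        ≤ (2 : ℝ) ^ (-(n : ℤ) - 1) := by
          apply zpow_le_zpow_right₀ one_le_two
          have hc : (n : ℤ) ≤ ((sInf D : ℕ) : ℤ) := by exact_mod_cast hnle
          omega
      _ < s := hs

lemma agree_of_baireDist_lt {Γ : Type*} {x y : ℕ → Γ} {n : ℕ}
    (h : baireDist x y < (2 : ℝ) ^ (-(n : ℤ) - 1)) : ∀ i, i ≤ n → x i = y i := by
  classical
  intro i hi
  unfold baireDist at h
  split_ifs at h with hxy
  · rw [hxy]
  · by_contra hne
    set D := {i : ℕ | x i ≠ y i} with hD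
    have hile : sInf D ≤ i := Nat.sInf_le hne
    have hle : (2 : ℝ) ^ (-(n : ℤ) - 1) ≤ (2 : ℝ) ^ (-((sInf D : ℕ) : ℤ) - 1) := by
      apply zpow_le_zpow_right₀ one_le_two
      have hc1 : ((sInf D : ℕ) : ℤ) ≤ (i : ℤ) := by exact_mod_cast hile
      have hc2 : (i : ℤ) ≤ (n : ℤ) := by exact_mod_cast hi
      omega
    linarith

lemma notConta_porous_core {Γ : Type*} [Nonempty Γ] (m : ℕ) (w : Fin m → Γ)
    (ψ : ℕ → Γ) (r : ℝ) (hr : 0 < r) (hr1 : r < 1) :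
    ∃ υ : ℕ → Γ, ∀ x : ℕ → Γ, baireDist υ x < (2 : ℝ) ^ (-(m : ℤ) - 1) * r →
      baireDist ψ x < r ∧ ∃ j : ℕ, ∀ l : Fin m, x (j + l.1) = w l := by
  classical
  have hPex : ∃ n : ℕ, (2 : ℝ) ^ (-(n : ℤ) - 1) < r := by
    obtain ⟨n, hn⟩ := exists_pow_lt_of_lt_one hr (by norm_num : (1 / 2 : ℝ) < 1)
    refine ⟨n, lt_of_le_of_lt ?_ hn⟩
    have h1 : (2 : ℝ) ^ (-(n : ℤ) - 1) = ((2 : ℝ) ^ (n + 1 : ℕ))⁻¹ := by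
      rw [show (-(n : ℤ) - 1) = -((n + 1 : ℕ) : ℤ) from by push_cast; ring,
        zpow_neg, zpow_natCast]
    have h2 : ((1 : ℝ) / 2) ^ n = ((2 : ℝ) ^ n)⁻¹ := by
      rw [one_div, inv_pow]
    rw [h1, h2]
    apply inv_anti₀ (by positivity)
    exact pow_le_pow_right₀ one_le_two (Nat.le_succ n)
  set n := Nat.find hPex with hn
  have hn1 : (2 : ℝ) ^ (-(n : ℤ) - 1) < r := Nat.find_spec hPex
  have hn2 : r ≤ (2 : ℝ) ^ (-(n : ℤ)) := by
    rcases Nat.eq_zero_or_pos n with h0 | hpos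
    · rw [h0]
      simpa using hr1.le
    · have hmin := Nat.find_min hPex (show n - 1 < n from by omega)
      push_neg at hmin
      calc r ≤ (2 : ℝ) ^ (-((n - 1 : ℕ) : ℤ) - 1) := hmin
        _ = (2 : ℝ) ^ (-(n : ℤ)) := by
          congr 1
          have : ((n - 1 : ℕ) : ℤ) = (n : ℤ) - 1 := by omega
          omega
  refine ⟨fun i => if i < n then ψ i else if h : i - n < m then w ⟨i - n, h⟩ else ψ i,
    fun x hx => ?_⟩
  set υ : ℕ → Γ := fun i => if i < n then ψ i else if h : i - n < m then w ⟨i - n, h⟩ else ψ i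
    with hυ
  have hx' : baireDist υ x < (2 : ℝ) ^ (-((n + m : ℕ) : ℤ) - 1) := by
    calc baireDist υ x < (2 : ℝ) ^ (-(m : ℤ) - 1) * r := hx
      _ ≤ (2 : ℝ) ^ (-(m : ℤ) - 1) * (2 : ℝ) ^ (-(n : ℤ)) := by
          apply mul_le_mul_of_nonneg_left hn2 (by positivity)
      _ = (2 : ℝ) ^ (-((n + m : ℕ) : ℤ) - 1) := by
          rw [← zpow_add₀ (two_ne_zero)]
          congr 1
          push_cast
          ring
  have hagree : ∀ i, i ≤ n + m → υ i = x i := agree_of_baireDist_lt hx'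
  constructor
  · refine baireDist_lt_of_agree (fun i hi => ?_) hn1
    have h1 : υ i = ψ i := by rw [hυ]; simp only [if_pos hi]
    rw [← h1]
    exact hagree i (by omega)
  · refine ⟨n, fun l => ?_⟩
    have h1 : υ (n + l.1) = w l := by
      rw [hυ]
      simp only [if_neg (by omega : ¬ n + l.1 < n)]
      rw [dif_pos (show n + l.1 - n < m by omega)]
      congr
      omega
    rw [← hagree (n + l.1) (by omega), h1]

lemma porous_of_subset_notConta {Γ : Type*} [Nonempty Γ] (m : ℕ) (w : Fin m → Γ)
    (Ψ : Set (ℕ → Γ))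
    (hΨ : Ψ ⊆ {σ : ℕ → Γ | ∀ j : ℕ, ¬ ∀ l : Fin m, σ (j + l.1) = w l}) :
    PorousWith baireDist Ψ := by
  refine ⟨(2 : ℝ) ^ (-(m : ℤ) - 1), by positivity, ?_, 1, one_pos, ?_⟩
  · calc (2 : ℝ) ^ (-(m : ℤ) - 1) < (2 : ℝ) ^ (0 : ℤ) :=
        zpow_lt_zpow_right₀ one_lt_two (by omega)
      _ = 1 := zpow_zero 2
  · intro ψ hψ r hr hr1
    obtain ⟨υ, hυ⟩ := notConta_porous_core m w ψ r hr hr1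
    refine ⟨υ, fun x hx => ⟨(hυ x hx).1, fun hxΨ => ?_⟩⟩
    obtain ⟨j, hj⟩ := (hυ x hx).2
    exact hΨ hxΨ j hj

lemma porous_empty {M : Type*} (ρ : M → M → ℝ) : PorousWith ρ (∅ : Set M) :=
  ⟨1 / 2, by norm_num, by norm_num, 1, one_pos, fun ψ h => absurd h (Set.notMem_empty ψ)⟩

end AuxBaire
/-- Theorem "porousthm": for a strongly-fibred attractor `A` and
`x₀` in its basin, the set of driving sequences `σ` for which the chaos game fails to
yield `A` (i.e. `C_∞(x₀,σ) ≠ A`) is σ-porous in the Cantor space with the Baire metric. -/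
theorem chaosGame_faulty_sequences_sigmaPorous
    (f : Λ → X → X) (hf : ∀ a : Λ, Continuous (f a))
    (A : Set X) (hA : IsAttractor f A) (hsf : StronglyFibred f A)
    (x₀ : X) (hx₀ : x₀ ∈ basin f A) :
    SigmaPorousWith baireDist {σ : ℕ → Λ | Cinf f σ x₀ ≠ A} := by
  classical
  obtain ⟨hAne, hAc, -⟩ := hA
  obtain ⟨U, ⟨hUo, hAU, hUatt⟩, hx₀U⟩ := Set.mem_sUnion.1 hx₀
  have htendA := hUatt A hAne hAc hAU
  have htendx := hUatt {x₀} ⟨x₀, rfl⟩ isCompact_singleton (Set.singleton_subset_iff.2 hx₀U)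
  have hFA : Hutch f A ⊆ A := hutch_attractor_subset hf hAne hAc htendA
  have key : ∀ σ : ℕ → Λ, Disjunctive σ → Cinf f σ x₀ = A := by
    intro σ hσ
    refine Set.Subset.antisymm (cinf_subset_attractor hf hAne hAc htendx σ) ?_
    exact attractor_subset_cinf hf hAne hAc hFA hsf
      (tendsto_infDist_hutch_seq hf hAne hAc isCompact_singleton htendx _
        (orbit_mem_hutch_iterate σ x₀)) hσ
  haveI : Encodable Λ := Fintype.toEncodable Λ
  haveI : ∀ m : ℕ, Encodable (Fin m → Λ) := fun m => Fintype.toEncodable _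
  set Faulty : Set (ℕ → Λ) := {σ : ℕ → Λ | Cinf f σ x₀ ≠ A} with hFaulty
  set c : ℕ → Set (ℕ → Λ) := fun k =>
    (Encodable.decode (α := Σ m : ℕ, Fin m → Λ) k).elim ∅ fun p =>
      Faulty ∩ {σ : ℕ → Λ | ∀ j : ℕ, ¬ ∀ l : Fin p.1, σ (j + l.1) = p.2 l} with hc
  refine ⟨c, fun k => ?_, ?_⟩
  · rcases hdec : (Encodable.decode (α := Σ m : ℕ, Fin m → Λ) k) with - | p
    · rw [hc]
      simp only [hdec, Option.elim]
      exact porous_empty _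
    · rw [hc]
      simp only [hdec, Option.elim]
      exact porous_of_subset_notConta p.1 p.2 _ Set.inter_subset_right
  · refine Set.Subset.antisymm ?_ ?_
    · intro σ hσ
      have hnd : ¬ Disjunctive σ := fun hd => hσ (key σ hd)
      rw [Disjunctive] at hnd
      push_neg at hnd
      obtain ⟨m, w, hw⟩ := hnd
      refine Set.mem_iUnion.2 ⟨Encodable.encode (⟨m, w⟩ : Σ m : ℕ, Fin m → Λ), ?_⟩
      rw [hc]
      simp only [Encodable.encodek, Option.elim]
      refine ⟨hσ, fun j hall => ?_⟩
      obtain ⟨l, hl⟩ := hw j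
      exact hl (hall l)
    · refine Set.iUnion_subset fun k => ?_
      rcases hdec : (Encodable.decode (α := Σ m : ℕ, Fin m → Λ) k) with - | p
      · rw [hc]; simp only [hdec, Option.elim]; exact Set.empty_subset _
      · rw [hc]; simp only [hdec, Option.elim]; exact Set.inter_subset_left
end
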